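/- Let ν ∈ N with ⟨ν, e_i⟩ > 0 for all 1 ≤ i ≤ d, and let 1 ≤ k ≤ d. If the quantity m(k) associated to the algorithm vector w_k is nonzero, then n(k) is also nonzero and ⟨ν, λ_{n(k)}⟩ < ⟨ν, e_{m(k)}⟩. -/

import Mathlib

open scoped BigOperators Classical

namespace QO

/-- The standard pairing `⟨ν, m⟩ = ∑ i, ν i * m i` on `ℚ^d`. -/
def pair (d : ℕ) (ν m : Fin d → ℚ) : ℚ := ∑ i, ν i * m i

/-- `E d lam i` is the `i`-th standard basis vector of `ℚ^d` for `1 ≤ i ≤ d`,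
and equals the characteristic exponent `λ_{i-d}` for `d + 1 ≤ i` (1-based indexing). -/
def E (d : ℕ) (lam : ℕ → Fin d → ℚ) (i : ℕ) : Fin d → ℚ :=
  if 1 ≤ i ∧ i ≤ d then (fun j => if (j : ℕ) = i - 1 then 1 else 0) else lam (i - d)

/-- The lattice `M_j = ℤ^d + ℤλ_1 + ⋯ + ℤλ_j`, as an additive subgroup of `ℚ^d`. -/
def Mlat (d : ℕ) (lam : ℕ → Fin d → ℚ) : ℕ → AddSubgroup (Fin d → ℚ)
  | 0 => AddSubgroup.closure (Set.range fun i : Fin d => (fun j => if j = i then (1 : ℚ) else 0))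
  | (j + 1) => Mlat d lam j ⊔ AddSubgroup.closure {lam (j + 1)}

/-- The dual lattice `N` of `M = M_g`. -/
def Ndual (d g : ℕ) (lam : ℕ → Fin d → ℚ) : Set (Fin d → ℚ) :=
  { ν | ∀ m ∈ Mlat d lam g, ∃ z : ℤ, pair d ν m = (z : ℚ) }

/-- Admissible index sets for `J_k`: `k` indices in `{1, …, d+g}`, at most one of which
exceeds `d`, whose associated vectors are linearly independent over `ℚ`. -/
def IdxOk (d g : ℕ) (lam : ℕ → Fin d → ℚ) (k : ℕ) (I : Finset ℕ) : Prop :=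
  I.card = k ∧ I ⊆ Finset.Icc 1 (d + g) ∧ (I.filter fun i => d + 1 ≤ i).card ≤ 1 ∧
    LinearIndependent ℚ (fun i : {x // x ∈ I} => E d lam i.1)

/-- The set `J_k` of sums `e_{j_1} + ⋯ + e_{j_k}`. -/
def Jset (d g : ℕ) (lam : ℕ → Fin d → ℚ) (k : ℕ) : Set (Fin d → ℚ) :=
  { w | ∃ I : Finset ℕ, IdxOk d g lam k I ∧ w = ∑ i ∈ I, E d lam i }

/-- The set `J_k`, as a finite set. -/
noncomputable def Jfin (d g : ℕ) (lam : ℕ → Fin d → ℚ) (k : ℕ) : Finset (Fin d → ℚ) :=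
  ((Finset.Icc 1 (d + g)).powerset.filter fun I => IdxOk d g lam k I).image
    fun I => ∑ i ∈ I, E d lam i

/-- The support function `ord_{J_k}(ν) = min_{w ∈ J_k} ⟨ν, w⟩`. -/
noncomputable def ordJ (d g : ℕ) (lam : ℕ → Fin d → ℚ) (k : ℕ) (ν : Fin d → ℚ) : ℚ :=
  if h : (Jfin d g lam k).Nonempty then ((Jfin d g lam k).image (pair d ν)).min' (h.image _)
  else 0

/-- `φ_k(ν) = ord_{J_k}(ν) - ord_{J_{k-1}}(ν)` (note `ord_{J_0} = 0`, hence also `φ_0 = 0`). -/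
noncomputable def phiJ (d g : ℕ) (lam : ℕ → Fin d → ℚ) (k : ℕ) (ν : Fin d → ℚ) : ℚ :=
  ordJ d g lam k ν - ordJ d g lam (k - 1) ν

/-- The sort key of the total order `≤_ν` on the indices `1, …, d+g`: sort by the value
`⟨ν, ·⟩`, breaking ties (in particular ties between an `e_i` with `i ≤ d` and a `λ_j`)
by the index, so that `e_i` is placed first. -/
noncomputable def keyIdx (d : ℕ) (lam : ℕ → Fin d → ℚ) (ν : Fin d → ℚ) (i : ℕ) : ℚ ×ₗ ℕ :=
  toLex (pair d ν (E d lam i), i)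

/-- The `≤_ν`-least element of a finite set of indices. -/
noncomputable def leastIdx (d : ℕ) (lam : ℕ → Fin d → ℚ) (ν : Fin d → ℚ) (S : Finset ℕ) : ℕ :=
  if h : S.Nonempty then (ofLex ((S.image (keyIdx d lam ν)).min' (h.image _))).2 else 0

/-- The `≤_ν`-greatest element of a finite set of indices. -/
noncomputable def greatestIdx (d : ℕ) (lam : ℕ → Fin d → ℚ) (ν : Fin d → ℚ)
    (S : Finset ℕ) : ℕ :=
  if h : S.Nonempty then (ofLex ((S.image (keyIdx d lam ν)).max' (h.image _))).2 else 0

/-- The `ℚ`-span of the vectors indexed by `I`. -/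
def spanOf (d : ℕ) (lam : ℕ → Fin d → ℚ) (I : Finset ℕ) : Submodule ℚ (Fin d → ℚ) :=
  Submodule.span ℚ ((fun i => E d lam i) '' (I : Set ℕ))

/-- `n(k)`: the index `n` such that `λ_n` is a summand of `w_k`, and `0` if there is none. -/
noncomputable def nVal (d : ℕ) (I : Finset ℕ) : ℕ :=
  if h : (I.filter fun i => d + 1 ≤ i).Nonempty then (I.filter fun i => d + 1 ≤ i).min' h - d
  else 0

/-- `t(k)`: the least `1 ≤ j ≤ g` with `λ_j ∉ ℓ_k(ν)`, and `g + 1` if there is none. -/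
noncomputable def tVal (d g : ℕ) (lam : ℕ → Fin d → ℚ) (I : Finset ℕ) : ℕ :=
  if h : ((Finset.Icc 1 g).filter fun j => lam j ∉ spanOf d lam I).Nonempty then
    ((Finset.Icc 1 g).filter fun j => lam j ∉ spanOf d lam I).min' h
  else g + 1

/-- `m(k)`: the index `m` with `({e_1, …, e_d} ∩ ℓ_k(ν)) ∖ {summands of w_k} = {e_m}`,
and `0` if this set is empty. -/
noncomputable def mVal (d : ℕ) (lam : ℕ → Fin d → ℚ) (I : Finset ℕ) : ℕ :=
  if h : (((Finset.Icc 1 d).filter fun i => E d lam i ∈ spanOf d lam I) \ I).Nonempty then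
    (((Finset.Icc 1 d).filter fun i => E d lam i ∈ spanOf d lam I) \ I).min' h
  else 0

/-- `i(k)`: the `≤_ν`-least index `1 ≤ i ≤ d + g` with `w_k + e_i ∈ J_{k+1}`. -/
noncomputable def iVal (d g : ℕ) (lam : ℕ → Fin d → ℚ) (ν : Fin d → ℚ) (k : ℕ)
    (I : Finset ℕ) : ℕ :=
  leastIdx d lam ν ((Finset.Icc 1 (d + g)).filter fun i => IdxOk d g lam (k + 1) (insert i I))

/-- One step of the algorithm, from the summands of `w_k` to the summands of `w_{k+1}`:
`a_{k+1} = w_k + e_{i(k)}` and `b_{k+1} = w_k - λ_{n(k)} + λ_{t(k)} + e_{m(k)}`; the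
candidate `b_{k+1}` is discarded when `m(k) = 0` or `t(k) = g + 1`, and otherwise
`w_{k+1} = a_{k+1}` exactly when `⟨ν, a_{k+1}⟩ ≤ ⟨ν, b_{k+1}⟩`. -/
noncomputable def step (d g : ℕ) (lam : ℕ → Fin d → ℚ) (ν : Fin d → ℚ) (k : ℕ)
    (I : Finset ℕ) : Finset ℕ :=
  let a : Finset ℕ := insert (iVal d g lam ν k I) I
  let b : Finset ℕ :=
    insert (mVal d lam I) (insert (d + tVal d g lam I)
      (if nVal d I = 0 then I else I.erase (d + nVal d I)))
  if mVal d lam I = 0 ∨ tVal d g lam I = g + 1 then a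
  else if pair d ν (∑ i ∈ a, E d lam i) ≤ pair d ν (∑ i ∈ b, E d lam i) then a else b

/-- The index sets `W ν k` of summands of the algorithm's vectors `w_k`; the vector `w_1`
is the `≤_ν`-least element of `{e_1, …, e_d, λ_1}`. -/
noncomputable def W (d g : ℕ) (lam : ℕ → Fin d → ℚ) (ν : Fin d → ℚ) : ℕ → Finset ℕ
  | 0 => ∅
  | 1 => {leastIdx d lam ν (insert (d + 1) (Finset.Icc 1 d))}
  | (k + 2) => step d g lam ν (k + 1) (W d g lam ν (k + 1))

/-- The algorithm's vector `w_k`. -/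
noncomputable def wVec (d g : ℕ) (lam : ℕ → Fin d → ℚ) (ν : Fin d → ℚ) (k : ℕ) :
    Fin d → ℚ :=
  ∑ i ∈ W d g lam ν k, E d lam i

/-- `ℓ_k(ν)`: the `ℚ`-span of the summands of `w_k`. -/
noncomputable def ellK (d g : ℕ) (lam : ℕ → Fin d → ℚ) (ν : Fin d → ℚ) (k : ℕ) :
    Submodule ℚ (Fin d → ℚ) :=
  spanOf d lam (W d g lam ν k)

/-- `ℓ_ν^s = span_ℚ{e_j : 1 ≤ j < d + t(k), ⟨ν, e_j⟩ ≤ s}`, where `k` is the index with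
`φ_k(ν) ≤ s < φ_{k+1}(ν)`. -/
noncomputable def ellS (d g : ℕ) (lam : ℕ → Fin d → ℚ) (ν : Fin d → ℚ) (s : ℚ) (k : ℕ) :
    Submodule ℚ (Fin d → ℚ) :=
  Submodule.span ℚ ((fun i => E d lam i) ''
    { i : ℕ | 1 ≤ i ∧ i < d + tVal d g lam (W d g lam ν k) ∧ pair d ν (E d lam i) ≤ s })

/-- `p(k)` (with the convention `λ_0 = 0`). -/
noncomputable def pVal (d g : ℕ) (lam : ℕ → Fin d → ℚ) (ν : Fin d → ℚ) (s : ℚ)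
    (k : ℕ) : ℕ :=
  if nVal d (W d g lam ν k) = 0 then
    if h : ((Finset.Icc 0 g).filter fun j =>
        pair d ν (if j = 0 then (0 : Fin d → ℚ) else lam j) ≤ s).Nonempty then
      ((Finset.Icc 0 g).filter fun j =>
        pair d ν (if j = 0 then (0 : Fin d → ℚ) else lam j) ≤ s).max' h
    else 0
  else
    (insert (nVal d (W d g lam ν k))
      ((Finset.Ioo (nVal d (W d g lam ν k)) (tVal d g lam (W d g lam ν k))).filter fun j =>
        mVal d lam (W d g lam ν k) ≠ 0 ∧
          pair d ν (E d lam (mVal d lam (W d g lam ν k)) - lam (nVal d (W d g lam ν k)) + lam j)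
            ≤ s)).max' (Finset.insert_nonempty _ _)

/-- `q_η`: the index of the `≤_ν`-greatest element of `{e_1, …, e_d} ∩ ℓ(η)`, where
`ℓ(η) = span_ℚ{e_i : η_i ≠ 0}`. -/
noncomputable def qIdx (d : ℕ) (lam : ℕ → Fin d → ℚ) (ν η : Fin d → ℚ) : ℕ :=
  greatestIdx d lam ν ((Finset.Icc 1 d).filter fun i => pair d η (E d lam i) ≠ 0)

section Proofs

variable {d g : ℕ} {lam : ℕ → Fin d → ℚ} {ν : Fin d → ℚ}

lemma pair_sum (ν : Fin d → ℚ) (I : Finset ℕ) (f : ℕ → Fin d → ℚ) :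
    pair d ν (∑ i ∈ I, f i) = ∑ i ∈ I, pair d ν (f i) := by
  simp only [pair, Finset.sum_apply, Finset.mul_sum]
  exact Finset.sum_comm

lemma E_small_apply {i : ℕ} (h1 : 1 ≤ i) (h2 : i ≤ d) (j : Fin d) :
    E d lam i j = if (j : ℕ) = i - 1 then 1 else 0 := by
  simp only [E, if_pos (And.intro h1 h2)]

lemma E_big {j : ℕ} (hj : 1 ≤ j) : E d lam (d + j) = lam j := by
  have h : ¬ (1 ≤ d + j ∧ d + j ≤ d) := by omega
  have h2 : d + j - d = j := by omega
  simp only [E, if_neg h, h2]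

lemma E_apply_eq_zero {i m : ℕ} (hi1 : 1 ≤ i) (hi2 : i ≤ d) (hm1 : 1 ≤ m) (hm2 : m ≤ d)
    (hne : i ≠ m) : E d lam i ⟨m - 1, by omega⟩ = 0 := by
  rw [E_small_apply hi1 hi2]
  have : ¬ ((m : ℕ) - 1 = i - 1) := by omega
  simp [this]

lemma E_apply_eq_one {m : ℕ} (hm1 : 1 ≤ m) (hm2 : m ≤ d) :
    E d lam m ⟨m - 1, by omega⟩ = 1 := by
  rw [E_small_apply hm1 hm2]; simp

lemma apply_eq_zero_of_mem_span {T : Set (Fin d → ℚ)} {j : Fin d}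
    (h : ∀ v ∈ T, v j = 0) {x : Fin d → ℚ} (hx : x ∈ Submodule.span ℚ T) : x j = 0 := by
  have hle : Submodule.span ℚ T ≤
      LinearMap.ker (LinearMap.proj (R := ℚ) (φ := fun _ : Fin d => ℚ) j) := by
    rw [Submodule.span_le]
    intro v hv
    simpa [LinearMap.mem_ker] using h v hv
  simpa [LinearMap.mem_ker] using hle hx

lemma not_mem_span_small {S : Finset ℕ} (hS : ∀ i ∈ S, 1 ≤ i ∧ i ≤ d) {m : ℕ}
    (hm1 : 1 ≤ m) (hm2 : m ≤ d) (hmS : m ∉ S) : E d lam m ∉ spanOf d lam S := by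
  intro h
  have h0 : E d lam m (⟨m - 1, by omega⟩ : Fin d) = 0 := by
    refine apply_eq_zero_of_mem_span ?_ h
    rintro v ⟨i, hi, rfl⟩
    have hi' : i ∈ S := by exact_mod_cast hi
    exact E_apply_eq_zero (hS i hi').1 (hS i hi').2 hm1 hm2
      (by rintro rfl; exact hmS hi')
  rw [E_apply_eq_one hm1 hm2] at h0
  exact one_ne_zero h0

lemma mem_Mlat_zero {i : ℕ} (h1 : 1 ≤ i) (h2 : i ≤ d) : E d lam i ∈ Mlat d lam 0 := by
  show E d lam i ∈ Mlat d lam 0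
  unfold Mlat
  apply AddSubgroup.subset_closure
  refine ⟨⟨i - 1, by omega⟩, ?_⟩
  funext j
  simp only [E_small_apply h1 h2, Fin.ext_iff]

lemma Mlat_mono : Monotone (Mlat d lam) := by
  apply monotone_nat_of_le_succ
  intro n
  exact le_sup_left

lemma lam_mem_Mlat {j : ℕ} (hj : 1 ≤ j) : lam j ∈ Mlat d lam j := by
  obtain ⟨j', rfl⟩ : ∃ j', j = j' + 1 := ⟨j - 1, by omega⟩
  exact (le_sup_right : _ ≤ Mlat d lam (j' + 1))
    (AddSubgroup.subset_closure (Set.mem_singleton _))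

lemma E_injOn (hnotin : ∀ j, 1 ≤ j → j ≤ g → lam j ∉ Mlat d lam (j - 1)) :
    ∀ i₁, 1 ≤ i₁ → i₁ ≤ d + g → ∀ i₂, 1 ≤ i₂ → i₂ ≤ d + g →
      E d lam i₁ = E d lam i₂ → i₁ = i₂ := by
  have key : ∀ i₁, 1 ≤ i₁ → i₁ ≤ d + g → ∀ i₂, 1 ≤ i₂ → i₂ ≤ d + g → i₁ < i₂ →
      E d lam i₁ ≠ E d lam i₂ := by
    intro i₁ h1 h2 i₂ h3 h4 hlt heq
    by_cases hs2 : i₂ ≤ d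
    · have hs1 : i₁ ≤ d := by omega
      have hc := congrFun heq (⟨i₂ - 1, by omega⟩ : Fin d)
      rw [E_apply_eq_zero h1 hs1 h3 hs2 (by omega), E_apply_eq_one h3 hs2] at hc
      exact zero_ne_one hc
    · have h2e : E d lam i₂ = lam (i₂ - d) := by
        have h' := E_big (lam := lam) (d := d) (j := i₂ - d) (by omega)
        rw [show d + (i₂ - d) = i₂ by omega] at h'
        exact h'
      have h1mem : E d lam i₁ ∈ Mlat d lam (i₂ - d - 1) := by
        by_cases hs1 : i₁ ≤ d
        · exact Mlat_mono (Nat.zero_le _) (mem_Mlat_zero h1 hs1)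
        · have h1e : E d lam i₁ = lam (i₁ - d) := by
            have h' := E_big (lam := lam) (d := d) (j := i₁ - d) (by omega)
            rw [show d + (i₁ - d) = i₁ by omega] at h'
            exact h'
          rw [h1e]
          exact Mlat_mono (by omega) (lam_mem_Mlat (by omega))
      rw [heq, h2e] at h1mem
      exact hnotin (i₂ - d) (by omega) (by omega) h1mem
  intro i₁ h1 h2 i₂ h3 h4 heq
  rcases lt_trichotomy i₁ i₂ with h | h | h
  · exact absurd heq (key _ h1 h2 _ h3 h4 h)
  · exact h
  · exact absurd heq.symm (key _ h3 h4 _ h1 h2 h)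


lemma li_small {S : Finset ℕ} (hS : ∀ i ∈ S, 1 ≤ i ∧ i ≤ d) :
    LinearIndependent ℚ (fun i : {x // x ∈ S} => E d lam i.1) := by
  have b := (Pi.basisFun ℚ (Fin d)).linearIndependent
  have hfun : (fun i : {x // x ∈ S} => E d lam i.1) =
      (fun i : {x // x ∈ S} =>
        Pi.basisFun ℚ (Fin d) ⟨i.1 - 1, by have := hS i.1 i.2; omega⟩) := by
    funext i
    have hi := hS i.1 i.2
    rw [Pi.basisFun_apply]
    funext j
    rw [E_small_apply hi.1 hi.2, Pi.single_apply]
    simp only [Fin.ext_iff]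
  rw [hfun]
  exact b.comp _ (by
    intro x y hxy
    have hx := hS x.1 x.2; have hy := hS y.1 y.2
    have hv : x.1 - 1 = y.1 - 1 := congrArg Fin.val hxy
    exact Subtype.ext (by omega))

lemma li_insert (hnotin : ∀ j, 1 ≤ j → j ≤ g → lam j ∉ Mlat d lam (j - 1))
    {S : Finset ℕ} (hS : ∀ i ∈ S, 1 ≤ i ∧ i ≤ d + g) {a : ℕ}
    (ha1 : 1 ≤ a) (ha2 : a ≤ d + g)
    (hli : LinearIndependent ℚ (fun i : {x // x ∈ S} => E d lam i.1))
    (hsp : E d lam a ∉ spanOf d lam S) :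
    LinearIndependent ℚ (fun i : {x // x ∈ insert a S} => E d lam i.1) := by
  have hinj : Set.InjOn (E d lam) ↑(insert a S) := by
    intro x hx y hy hxy
    have hx' : 1 ≤ x ∧ x ≤ d + g := by
      rcases Finset.mem_insert.1 (by exact_mod_cast hx) with rfl | hx2
      exacts [⟨ha1, ha2⟩, hS x hx2]
    have hy' : 1 ≤ y ∧ y ≤ d + g := by
      rcases Finset.mem_insert.1 (by exact_mod_cast hy) with rfl | hy2
      exacts [⟨ha1, ha2⟩, hS y hy2]
    exact E_injOn hnotin x hx'.1 hx'.2 y hy'.1 hy'.2 hxy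
  have hinjS : Set.InjOn (E d lam) ↑S := by
    apply hinj.mono
    rw [Finset.coe_insert]
    exact Set.subset_insert _ _
  have h1 : LinearIndependent ℚ (fun x : ↑((E d lam) '' ↑S) => (x : Fin d → ℚ)) :=
    (linearIndepOn_iff_image hinjS).1 hli
  have hnotmem : E d lam a ∉ (E d lam) '' ↑S := fun hmem => hsp (Submodule.subset_span hmem)
  apply (linearIndepOn_iff_image hinj).2
  have hset : (E d lam) '' ↑(insert a S) = insert (E d lam a) ((E d lam) '' ↑S) := by
    rw [Finset.coe_insert, Set.image_insert_eq]
  rw [hset]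
  exact (linearIndepOn_id_insert hnotmem).2 ⟨h1, hsp⟩

lemma leastIdx_spec {S : Finset ℕ} (h : S.Nonempty) :
    leastIdx d lam ν S ∈ S ∧
      ∀ x ∈ S, keyIdx d lam ν (leastIdx d lam ν S) ≤ keyIdx d lam ν x := by
  have hmem := Finset.min'_mem (S.image (keyIdx d lam ν)) (h.image _)
  rw [Finset.mem_image] at hmem
  obtain ⟨i, hi, hkey⟩ := hmem
  have hL : leastIdx d lam ν S = i := by
    unfold leastIdx
    rw [dif_pos h, ← hkey]
    rfl
  rw [hL]
  refine ⟨hi, fun x hx => ?_⟩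
  rw [hkey]
  exact Finset.min'_le _ _ (Finset.mem_image_of_mem _ hx)

lemma pair_le_of_key_le {i j : ℕ} (h : keyIdx d lam ν i ≤ keyIdx d lam ν j) :
    pair d ν (E d lam i) ≤ pair d ν (E d lam j) := by
  unfold keyIdx at h
  rcases (Prod.Lex.le_iff).1 h with h' | h'
  · exact le_of_lt h'
  · exact le_of_eq h'.1

lemma pair_lt_of_key_le {i j : ℕ} (hji : j < i) (h : keyIdx d lam ν i ≤ keyIdx d lam ν j) :
    pair d ν (E d lam i) < pair d ν (E d lam j) := by
  unfold keyIdx at h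
  rcases (Prod.Lex.le_iff).1 h with h' | h'
  · exact h'
  · exact absurd (show i ≤ j from h'.2) (by omega)

lemma nVal_eq_zero_iff {I : Finset ℕ} :
    nVal d I = 0 ↔ (I.filter fun i => d + 1 ≤ i) = ∅ := by
  unfold nVal
  split_ifs with h
  · constructor
    · intro h0
      exfalso
      have hmem := Finset.min'_mem _ h
      rw [Finset.mem_filter] at hmem
      omega
    · intro he
      rw [he] at h
      exact absurd h (by simp)
  · exact ⟨fun _ => Finset.not_nonempty_iff_eq_empty.1 h, fun _ => rfl⟩

lemma nVal_of_filter_singleton {I : Finset ℕ} {j : ℕ}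
    (h : (I.filter fun i => d + 1 ≤ i) = {d + j}) : nVal d I = j := by
  unfold nVal
  simp only [h]
  rw [dif_pos (Finset.singleton_nonempty _)]
  rw [Finset.min'_singleton]
  omega

lemma big_filter_eq {I : Finset ℕ} (hcard : (I.filter fun i => d + 1 ≤ i).card ≤ 1)
    (hn : nVal d I ≠ 0) : (I.filter fun i => d + 1 ≤ i) = {d + nVal d I} := by
  have hne : (I.filter fun i => d + 1 ≤ i).Nonempty := by
    rw [Finset.nonempty_iff_ne_empty]
    exact fun he => hn (nVal_eq_zero_iff.2 he)
  have hmin := Finset.min'_mem _ hne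
  have hdn : d + nVal d I = (I.filter fun i => d + 1 ≤ i).min' hne := by
    unfold nVal
    rw [dif_pos hne]
    have := Finset.mem_filter.1 hmin
    omega
  have h1 : (I.filter fun i => d + 1 ≤ i).card = 1 :=
    le_antisymm hcard (Finset.card_pos.2 hne)
  obtain ⟨x, hx⟩ := Finset.card_eq_one.1 h1
  have hmem2 : d + nVal d I ∈ ({x} : Finset ℕ) := by
    rw [← hx, hdn]
    exact hmin
  rw [hx, Finset.mem_singleton.1 hmem2]

lemma mVal_spec {I : Finset ℕ} (hm : mVal d lam I ≠ 0) :
    1 ≤ mVal d lam I ∧ mVal d lam I ≤ d ∧ mVal d lam I ∉ I ∧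
      E d lam (mVal d lam I) ∈ spanOf d lam I := by
  unfold mVal at hm ⊢
  split_ifs at hm ⊢ with h
  · have hmem := Finset.min'_mem _ h
    rw [Finset.mem_sdiff, Finset.mem_filter, Finset.mem_Icc] at hmem
    exact ⟨hmem.1.1.1, hmem.1.1.2, hmem.2, hmem.1.2⟩
  · exact absurd rfl hm

lemma tVal_spec {I : Finset ℕ} (ht : tVal d g lam I ≠ g + 1) :
    1 ≤ tVal d g lam I ∧ tVal d g lam I ≤ g ∧ lam (tVal d g lam I) ∉ spanOf d lam I := by
  unfold tVal at ht ⊢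
  split_ifs at ht ⊢ with h
  · have hmem := Finset.min'_mem _ h
    rw [Finset.mem_filter, Finset.mem_Icc] at hmem
    exact ⟨hmem.1.1, hmem.1.2, hmem.2⟩
  · exact absurd rfl ht

lemma n_ne_zero {I : Finset ℕ} (hI : ∀ i ∈ I, 1 ≤ i ∧ i ≤ d + g)
    (hm : mVal d lam I ≠ 0) : nVal d I ≠ 0 := by
  intro h0
  rw [nVal_eq_zero_iff] at h0
  have hsmall : ∀ i ∈ I, 1 ≤ i ∧ i ≤ d := by
    intro i hi
    have h1 := hI i hi
    have h2 : ¬ (d + 1 ≤ i) := by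
      intro hb
      have : i ∈ I.filter fun i => d + 1 ≤ i := Finset.mem_filter.2 ⟨hi, hb⟩
      rw [h0] at this
      exact absurd this (Finset.notMem_empty i)
    omega
  obtain ⟨h1, h2, h3, h4⟩ := mVal_spec hm
  exact not_mem_span_small hsmall h1 h2 h3 h4

lemma exists_new (hd : 1 ≤ d) {k : ℕ} (hk : k < d) {I : Finset ℕ} (hcard : I.card = k) :
    ∃ m, 1 ≤ m ∧ m ≤ d ∧ m ∉ I ∧ E d lam m ∉ spanOf d lam I := by
  by_contra hcon
  push_neg at hcon
  have htop : ∀ m, 1 ≤ m → m ≤ d → E d lam m ∈ spanOf d lam I := by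
    intro m h1 h2
    by_cases hmI : m ∈ I
    · exact Submodule.subset_span ⟨m, by exact_mod_cast hmI, rfl⟩
    · exact hcon m h1 h2 hmI
  have hle : (⊤ : Submodule ℚ (Fin d → ℚ)) ≤ spanOf d lam I := by
    rw [← (Pi.basisFun ℚ (Fin d)).span_eq]
    rw [Submodule.span_le]
    rintro v ⟨j, rfl⟩
    have hb : (Pi.basisFun ℚ (Fin d)) j = E d lam ((j : ℕ) + 1) := by
      rw [Pi.basisFun_apply]
      funext j'
      rw [E_small_apply (by omega) (by omega : (j : ℕ) + 1 ≤ d), Pi.single_apply]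
      simp only [Fin.ext_iff]
      simp
    rw [hb]
    exact htop _ (by omega) (by omega)
  have heq : spanOf d lam I = ⊤ := top_unique hle
  have hfr : Module.finrank ℚ (spanOf d lam I) ≤ k := by
    have h := finrank_span_finset_le_card (R := ℚ) (M := Fin d → ℚ) (I.image (E d lam))
    have h2 : Module.finrank ℚ (spanOf d lam I) ≤ (I.image (E d lam)).card := by
      unfold spanOf
      rw [← Finset.coe_image]
      exact h
    exact le_trans h2 (le_trans Finset.card_image_le (le_of_eq hcard))
  rw [heq] at hfr
  have : Module.finrank ℚ (⊤ : Submodule ℚ (Fin d → ℚ)) = d := by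
    rw [finrank_top, Module.finrank_pi]
    simp
  omega

lemma idxOk_insert_small (hnotin : ∀ j, 1 ≤ j → j ≤ g → lam j ∉ Mlat d lam (j - 1))
    {k : ℕ} {I : Finset ℕ} (hIdx : IdxOk d g lam k I) {m : ℕ}
    (hm1 : 1 ≤ m) (hm2 : m ≤ d) (hmI : m ∉ I) (hsp : E d lam m ∉ spanOf d lam I) :
    IdxOk d g lam (k + 1) (insert m I) := by
  obtain ⟨hcard, hsub, hbig, hli⟩ := hIdx
  have hIsub : ∀ i ∈ I, 1 ≤ i ∧ i ≤ d + g := by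
    intro i hi
    have := hsub hi
    rw [Finset.mem_Icc] at this
    exact this
  refine ⟨?_, ?_, ?_, ?_⟩
  · rw [Finset.card_insert_of_notMem hmI, hcard]
  · exact Finset.insert_subset (Finset.mem_Icc.2 ⟨hm1, by omega⟩) hsub
  · rw [Finset.filter_insert, if_neg (by omega)]
    exact hbig
  · exact li_insert hnotin hIsub hm1 (by omega) hli hsp

lemma span_insert_rep {I : Finset ℕ} {n : ℕ} (hn1 : 1 ≤ n) (hdnI : d + n ∈ I)
    (hSsmall : ∀ i ∈ I.erase (d + n), 1 ≤ i ∧ i ≤ d) :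
    spanOf d lam I =
      Submodule.span ℚ (insert (lam n) ((fun i => E d lam i) '' ↑(I.erase (d + n)))) := by
  unfold spanOf
  congr 1
  conv_lhs => rw [← Finset.insert_erase hdnI]
  rw [Finset.coe_insert, Set.image_insert_eq, E_big hn1]

lemma mset_rep {I : Finset ℕ} {n : ℕ} (hn1 : 1 ≤ n) (hdnI : d + n ∈ I)
    (hSsmall : ∀ i ∈ I.erase (d + n), 1 ≤ i ∧ i ≤ d)
    {m : ℕ} (hm1 : 1 ≤ m) (hm2 : m ≤ d) (hmI : m ∉ I)
    (hsp : E d lam m ∈ spanOf d lam I) :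
    ∃ a : ℚ, ∃ z ∈ Submodule.span ℚ ((fun i => E d lam i) '' ↑(I.erase (d + n))),
      E d lam m = a • lam n + z ∧ a * lam n ⟨m - 1, by omega⟩ = 1 := by
  rw [span_insert_rep hn1 hdnI hSsmall] at hsp
  obtain ⟨a, z, hz, heq⟩ := Submodule.mem_span_insert.1 hsp
  refine ⟨a, z, hz, heq, ?_⟩
  have hz0 : z (⟨m - 1, by omega⟩ : Fin d) = 0 := by
    refine apply_eq_zero_of_mem_span ?_ hz
    rintro v ⟨i, hi, rfl⟩
    have hi' : i ∈ I.erase (d + n) := by exact_mod_cast hi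
    have hb := hSsmall i hi'
    exact E_apply_eq_zero hb.1 hb.2 hm1 hm2
      (by rintro rfl; exact hmI (Finset.mem_of_mem_erase hi'))
  have hc := congrFun heq (⟨m - 1, by omega⟩ : Fin d)
  rw [E_apply_eq_one hm1 hm2] at hc
  simp only [Pi.add_apply, Pi.smul_apply, smul_eq_mul, hz0, add_zero] at hc
  exact hc.symm

lemma mset_unique {I : Finset ℕ} {n : ℕ} (hn1 : 1 ≤ n) (hdnI : d + n ∈ I)
    (hSsmall : ∀ i ∈ I.erase (d + n), 1 ≤ i ∧ i ≤ d)
    {m₁ m₂ : ℕ} (h11 : 1 ≤ m₁) (h12 : m₁ ≤ d) (h13 : m₁ ∉ I)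
    (h14 : E d lam m₁ ∈ spanOf d lam I)
    (h21 : 1 ≤ m₂) (h22 : m₂ ≤ d) (h23 : m₂ ∉ I)
    (h24 : E d lam m₂ ∈ spanOf d lam I) : m₁ = m₂ := by
  by_contra hne
  obtain ⟨a₁, z₁, hz₁, heq₁, ha₁⟩ := mset_rep hn1 hdnI hSsmall h11 h12 h13 h14
  obtain ⟨a₂, z₂, hz₂, heq₂, ha₂⟩ := mset_rep hn1 hdnI hSsmall h21 h22 h23 h24
  have hz10 : z₁ (⟨m₂ - 1, by omega⟩ : Fin d) = 0 := by
    refine apply_eq_zero_of_mem_span ?_ hz₁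
    rintro v ⟨i, hi, rfl⟩
    have hi' : i ∈ I.erase (d + n) := by exact_mod_cast hi
    have hb := hSsmall i hi'
    exact E_apply_eq_zero hb.1 hb.2 h21 h22
      (by rintro rfl; exact h23 (Finset.mem_of_mem_erase hi'))
  have hc := congrFun heq₁ (⟨m₂ - 1, by omega⟩ : Fin d)
  rw [E_apply_eq_zero h11 h12 h21 h22 hne] at hc
  simp only [Pi.add_apply, Pi.smul_apply, smul_eq_mul, hz10, add_zero] at hc
  -- hc : 0 = a₁ * lam n ⟨m₂-1⟩
  have ha₁0 : a₁ ≠ 0 := by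
    intro h0
    rw [h0, zero_mul] at ha₁
    exact zero_ne_one ha₁
  have hl0 : lam n (⟨m₂ - 1, by omega⟩ : Fin d) = 0 := by
    rcases mul_eq_zero.1 hc.symm with h | h
    · exact absurd h ha₁0
    · exact h
  rw [hl0, mul_zero] at ha₂
  exact zero_ne_one ha₂

lemma step_inv (hd : 1 ≤ d) (hg : 1 ≤ g)
    (hnotin : ∀ j, 1 ≤ j → j ≤ g → lam j ∉ Mlat d lam (j - 1))
    {k : ℕ} (hk1 : 1 ≤ k) (hkd : k < d) {I : Finset ℕ}
    (hIdx : IdxOk d g lam k I)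
    (hii : nVal d I ≠ 0 → ∀ m, 1 ≤ m → m ≤ d → m ∉ I →
      pair d ν (lam (nVal d I)) < pair d ν (E d lam m)) :
    IdxOk d g lam (k + 1) (step d g lam ν k I) ∧
      (nVal d (step d g lam ν k I) ≠ 0 → ∀ m, 1 ≤ m → m ≤ d → m ∉ step d g lam ν k I →
        pair d ν (lam (nVal d (step d g lam ν k I))) < pair d ν (E d lam m)) := by
  have hIsub : ∀ i ∈ I, 1 ≤ i ∧ i ≤ d + g := fun i hi => Finset.mem_Icc.1 (hIdx.2.1 hi)
  set F := (Finset.Icc 1 (d + g)).filter (fun i => IdxOk d g lam (k + 1) (insert i I)) with hF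
  have memF : ∀ m, 1 ≤ m → m ≤ d → m ∉ I → E d lam m ∉ spanOf d lam I → m ∈ F := by
    intro m h1 h2 h3 h4
    exact Finset.mem_filter.2 ⟨Finset.mem_Icc.2 ⟨h1, by omega⟩,
      idxOk_insert_small hnotin hIdx h1 h2 h3 h4⟩
  obtain ⟨m₀, hm₀1, hm₀2, hm₀3, hm₀4⟩ := exists_new hd hkd hIdx.1
  have hFne : F.Nonempty := ⟨m₀, memF _ hm₀1 hm₀2 hm₀3 hm₀4⟩
  have hiv : iVal d g lam ν k I = leastIdx d lam ν F := rfl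
  obtain ⟨hi0F, hkey⟩ := leastIdx_spec (lam := lam) (ν := ν) hFne
  rw [← hiv] at hi0F hkey
  set i0 := iVal d g lam ν k I with hi0def
  have hi0Idx : IdxOk d g lam (k + 1) (insert i0 I) := (Finset.mem_filter.1 hi0F).2
  have hi0Icc : 1 ≤ i0 ∧ i0 ≤ d + g := Finset.mem_Icc.1 (Finset.mem_filter.1 hi0F).1
  have hi0nI : i0 ∉ I := by
    intro hmem
    have h1 := hi0Idx.1
    rw [Finset.insert_eq_self.2 hmem, hIdx.1] at h1
    omega
  have handleA : IdxOk d g lam (k + 1) (insert i0 I) ∧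
      (nVal d (insert i0 I) ≠ 0 → ∀ m, 1 ≤ m → m ≤ d → m ∉ insert i0 I →
        pair d ν (lam (nVal d (insert i0 I))) < pair d ν (E d lam m)) := by
    refine ⟨hi0Idx, ?_⟩
    intro hn' m hm1 hm2 hmnotin
    have hmI : m ∉ I := fun hmem => hmnotin (Finset.mem_insert_of_mem hmem)
    by_cases hi0d : i0 ≤ d
    · have hfil : (insert i0 I).filter (fun i => d + 1 ≤ i) = I.filter (fun i => d + 1 ≤ i) := by
        rw [Finset.filter_insert, if_neg (by omega)]
      have hnval : nVal d (insert i0 I) = nVal d I := by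
        unfold nVal
        rw [hfil]
      rw [hnval] at hn' ⊢
      exact hii hn' m hm1 hm2 hmI
    · have hb : d + 1 ≤ i0 := by omega
      have hIsmall : ∀ i ∈ I, 1 ≤ i ∧ i ≤ d := by
        intro i hi
        rcases hIsub i hi with ⟨h1, h2⟩
        refine ⟨h1, ?_⟩
        by_contra hid
        have hiF : i ∈ (insert i0 I).filter (fun i => d + 1 ≤ i) :=
          Finset.mem_filter.2 ⟨Finset.mem_insert_of_mem hi, by omega⟩
        have hi0F' : i0 ∈ (insert i0 I).filter (fun i => d + 1 ≤ i) :=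
          Finset.mem_filter.2 ⟨Finset.mem_insert_self _ _, hb⟩
        have hcard2 : 1 < ((insert i0 I).filter (fun i => d + 1 ≤ i)).card :=
          Finset.one_lt_card.2 ⟨i0, hi0F', i, hiF, fun h => hi0nI (h ▸ hi)⟩
        have := hi0Idx.2.2.1
        omega
      have hfil : (insert i0 I).filter (fun i => d + 1 ≤ i) = {d + (i0 - d)} := by
        rw [Finset.filter_insert, if_pos hb]
        have he : I.filter (fun i => d + 1 ≤ i) = ∅ := by
          rw [Finset.filter_eq_empty_iff]
          intro i hi
          have := hIsmall i hi
          omega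
        rw [he, show d + (i0 - d) = i0 by omega]
        rfl
      have hnv : nVal d (insert i0 I) = i0 - d := nVal_of_filter_singleton hfil
      have hE : lam (i0 - d) = E d lam i0 := by
        have h' := E_big (lam := lam) (d := d) (j := i0 - d) (by omega)
        rw [show d + (i0 - d) = i0 by omega] at h'
        exact h'.symm
      rw [hnv, hE]
      have hmF : m ∈ F := memF m hm1 hm2 hmI (not_mem_span_small hIsmall hm1 hm2 hmI)
      exact pair_lt_of_key_le (by omega) (hkey m hmF)
  by_cases hcond : mVal d lam I = 0 ∨ tVal d g lam I = g + 1
  · have hstep : step d g lam ν k I = insert i0 I := by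
      simp only [step]
      rw [if_pos hcond]
    rw [hstep]
    exact handleA
  · push_neg at hcond
    obtain ⟨hm0, ht0⟩ := hcond
    have hn0 : nVal d I ≠ 0 := n_ne_zero hIsub hm0
    set n := nVal d I with hn
    set t := tVal d g lam I with ht
    set m' := mVal d lam I with hm'
    set S := I.erase (d + n) with hSdef
    set B := insert m' (insert (d + t) S) with hB
    have hstep : step d g lam ν k I =
        if pair d ν (∑ i ∈ insert i0 I, E d lam i) ≤ pair d ν (∑ i ∈ B, E d lam i)
        then insert i0 I else B := by
      simp only [step]
      rw [if_neg (by push_neg; exact ⟨hm0, ht0⟩), if_neg hn0]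
    obtain ⟨hm'1, hm'2, hm'I, hm'sp⟩ := mVal_spec hm0
    obtain ⟨ht1, htg, htsp⟩ := tVal_spec ht0
    have hn1 : 1 ≤ n := Nat.one_le_iff_ne_zero.2 hn0
    have hfilI : I.filter (fun i => d + 1 ≤ i) = {d + n} := big_filter_eq hIdx.2.2.1 hn0
    have hdnI : d + n ∈ I := by
      have hx : d + n ∈ I.filter (fun i => d + 1 ≤ i) := by
        rw [hfilI]; exact Finset.mem_singleton_self _
      exact (Finset.mem_filter.1 hx).1
    have hSsmall : ∀ i ∈ S, 1 ≤ i ∧ i ≤ d := by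
      intro i hi
      have hiI := Finset.mem_of_mem_erase hi
      have hne := Finset.ne_of_mem_erase hi
      rcases hIsub i hiI with ⟨h1, h2⟩
      refine ⟨h1, ?_⟩
      by_contra hbig
      have hx : i ∈ I.filter (fun i => d + 1 ≤ i) := Finset.mem_filter.2 ⟨hiI, by omega⟩
      rw [hfilI] at hx
      exact hne (Finset.mem_singleton.1 hx)
    have hdtI : d + t ∉ I := by
      intro hmem
      apply htsp
      have hmem2 : E d lam (d + t) ∈ spanOf d lam I :=
        Submodule.subset_span ⟨d + t, by exact_mod_cast hmem, rfl⟩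
      rwa [E_big ht1] at hmem2
    have hdtS : d + t ∉ S := fun h => hdtI (Finset.mem_of_mem_erase h)
    have hm'S : m' ∉ S := fun h => hm'I (Finset.mem_of_mem_erase h)
    have hm'B : m' ∉ insert (d + t) S := by
      rw [Finset.mem_insert]
      rintro (h | h)
      · omega
      · exact hm'S h
    have hcardS : S.card = k - 1 := by
      rw [hSdef, Finset.card_erase_of_mem hdnI, hIdx.1]
    have hfilB : B.filter (fun i => d + 1 ≤ i) = {d + t} := by
      rw [hB, Finset.filter_insert, if_neg (by omega), Finset.filter_insert, if_pos (by omega)]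
      have he : S.filter (fun i => d + 1 ≤ i) = ∅ := by
        rw [Finset.filter_eq_empty_iff]
        intro i hi
        have := hSsmall i hi
        omega
      rw [he]
      rfl
    have hms_small : ∀ i ∈ insert m' S, 1 ≤ i ∧ i ≤ d := by
      intro i hi
      rcases Finset.mem_insert.1 hi with rfl | hi
      · exact ⟨hm'1, hm'2⟩
      · exact hSsmall i hi
    have hIdxB : IdxOk d g lam (k + 1) B := by
      refine ⟨?_, ?_, ?_, ?_⟩
      · rw [hB, Finset.card_insert_of_notMem hm'B, Finset.card_insert_of_notMem hdtS, hcardS]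
        omega
      · intro x hx
        rw [hB] at hx
        rcases Finset.mem_insert.1 hx with rfl | hx
        · exact Finset.mem_Icc.2 ⟨hm'1, by omega⟩
        rcases Finset.mem_insert.1 hx with rfl | hx
        · exact Finset.mem_Icc.2 ⟨by omega, by omega⟩
        · exact hIdx.2.1 (Finset.mem_of_mem_erase hx)
      · rw [hfilB]
        simp
      · have hLIms : LinearIndependent ℚ (fun i : {x // x ∈ insert m' S} => E d lam i.1) :=
          li_small hms_small
        have hspan_le : spanOf d lam (insert m' S) ≤ spanOf d lam I := by
          unfold spanOf
          rw [Finset.coe_insert, Set.image_insert_eq]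
          apply Submodule.span_le.2
          rintro v hv
          rcases Set.mem_insert_iff.1 hv with rfl | ⟨i, hi, rfl⟩
          · exact hm'sp
          · have hi' : i ∈ S := by exact_mod_cast hi
            exact Submodule.subset_span
              ⟨i, by exact_mod_cast Finset.mem_of_mem_erase hi', rfl⟩
        have hEdt : E d lam (d + t) ∉ spanOf d lam (insert m' S) := by
          intro hmem
          have h2 := hspan_le hmem
          rw [E_big ht1] at h2
          exact htsp h2
        have hLIB := li_insert hnotin (fun i hi => ⟨(hms_small i hi).1, by
            have := hms_small i hi; omega⟩)
          (show 1 ≤ d + t by omega) (show d + t ≤ d + g by omega) hLIms hEdt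
        rw [Finset.insert_comm] at hLIB
        rw [hB]
        exact hLIB
    have hnvB : nVal d B = t := nVal_of_filter_singleton hfilB
    have hsum_I : (∑ i ∈ I, pair d ν (E d lam i)) =
        pair d ν (lam n) + ∑ i ∈ S, pair d ν (E d lam i) := by
      rw [← Finset.add_sum_erase I _ hdnI, E_big hn1]
    have ha2 : pair d ν (∑ i ∈ insert i0 I, E d lam i) =
        pair d ν (E d lam i0) + (pair d ν (lam n) + ∑ i ∈ S, pair d ν (E d lam i)) := by
      rw [pair_sum, Finset.sum_insert hi0nI, hsum_I]
    have hb2 : pair d ν (∑ i ∈ B, E d lam i) =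
        pair d ν (E d lam m') + (pair d ν (lam t) + ∑ i ∈ S, pair d ν (E d lam i)) := by
      rw [hB, pair_sum, Finset.sum_insert hm'B, Finset.sum_insert hdtS, E_big ht1]
    have hineq_m' : pair d ν (lam n) < pair d ν (E d lam m') := hii hn0 m' hm'1 hm'2 hm'I
    rw [hstep]
    split_ifs with hab
    · exact handleA
    · have hab' := not_le.1 hab
      rw [ha2, hb2] at hab'
      have hlt : pair d ν (lam t) < pair d ν (E d lam i0) := by linarith
      refine ⟨hIdxB, ?_⟩
      intro hnB m hm1 hm2 hmB
      rw [hnvB]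
      have hmm' : m ≠ m' := by
        intro h
        exact hmB (by rw [hB, h]; exact Finset.mem_insert_self _ _)
      have hmS : m ∉ S := fun h =>
        hmB (by rw [hB]; exact Finset.mem_insert_of_mem (Finset.mem_insert_of_mem h))
      have hmI : m ∉ I := by
        intro hmem
        exact hmS (Finset.mem_erase.2 ⟨by omega, hmem⟩)
      by_cases hspm : E d lam m ∈ spanOf d lam I
      · exact absurd (mset_unique hn1 hdnI hSsmall hm1 hm2 hmI hspm hm'1 hm'2 hm'I hm'sp) hmm'
      · have hmF : m ∈ F := memF m hm1 hm2 hmI hspm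
        exact lt_of_lt_of_le hlt (pair_le_of_key_le (hkey m hmF))

lemma main_inv (hd : 1 ≤ d) (hg : 1 ≤ g)
    (hnotin : ∀ j, 1 ≤ j → j ≤ g → lam j ∉ Mlat d lam (j - 1)) :
    ∀ k, 1 ≤ k → k ≤ d →
      IdxOk d g lam k (W d g lam ν k) ∧
      (nVal d (W d g lam ν k) ≠ 0 → ∀ m, 1 ≤ m → m ≤ d → m ∉ W d g lam ν k →
        pair d ν (lam (nVal d (W d g lam ν k))) < pair d ν (E d lam m)) := by
  intro k
  induction k with
  | zero => intro h; exact absurd h (by omega)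
  | succ k ih =>
    intro _ hkd
    by_cases hk0 : k = 0
    · subst hk0
      have hS₀ne : (insert (d + 1) (Finset.Icc 1 d)).Nonempty := Finset.insert_nonempty _ _
      obtain ⟨hi0S, hkey⟩ := leastIdx_spec (lam := lam) (ν := ν) hS₀ne
      have hW1 : W d g lam ν (0 + 1) =
          {leastIdx d lam ν (insert (d + 1) (Finset.Icc 1 d))} := rfl
      rw [hW1]
      set i0 := leastIdx d lam ν (insert (d + 1) (Finset.Icc 1 d)) with hi0
      have hib : 1 ≤ i0 ∧ i0 ≤ d + 1 := by
        rcases Finset.mem_insert.1 hi0S with h | h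
        · omega
        · rw [Finset.mem_Icc] at h; omega
      have hE0 : E d lam i0 ≠ 0 := by
        by_cases hsm : i0 ≤ d
        · intro h0
          have hc := congrFun h0 (⟨i0 - 1, by omega⟩ : Fin d)
          rw [E_apply_eq_one hib.1 hsm] at hc
          simp at hc
        · have hieq : i0 = d + 1 := by omega
          rw [hieq, E_big (by omega)]
          intro h0
          apply hnotin 1 le_rfl hg
          rw [show (1 : ℕ) - 1 = 0 from rfl, h0]
          exact (Mlat d lam 0).zero_mem
      constructor
      · refine ⟨Finset.card_singleton _, ?_, ?_, ?_⟩
        · intro x hx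
          rw [Finset.mem_singleton] at hx
          subst hx
          exact Finset.mem_Icc.2 ⟨hib.1, by omega⟩
        · exact le_trans (Finset.card_filter_le _ _) (by simp)
        · have h0 : LinearIndependent ℚ (fun i : {x // x ∈ (∅ : Finset ℕ)} => E d lam i.1) :=
            linearIndependent_empty_type
          have h1 := li_insert hnotin
            (fun i hi => absurd hi (Finset.notMem_empty i)) hib.1 (by omega) h0 (by
              unfold spanOf
              simp only [Finset.coe_empty, Set.image_empty, Submodule.span_empty,
                Submodule.mem_bot]
              exact hE0)
          simpa using h1
      · intro hn m hm1 hm2 hmI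
        by_cases hsm : i0 ≤ d
        · exfalso
          have hf : ({i0} : Finset ℕ).filter (fun i => d + 1 ≤ i) = ∅ := by
            rw [Finset.filter_singleton, if_neg (by omega)]
          exact hn (nVal_eq_zero_iff.2 hf)
        · have hieq : i0 = d + 1 := by omega
          have hfil : ({i0} : Finset ℕ).filter (fun i => d + 1 ≤ i) = {d + 1} := by
            rw [Finset.filter_singleton, if_pos (by omega), hieq]
          have hnv : nVal d {i0} = 1 := nVal_of_filter_singleton hfil
          rw [hnv]
          have hmS : m ∈ insert (d + 1) (Finset.Icc 1 d) :=
            Finset.mem_insert_of_mem (Finset.mem_Icc.2 ⟨hm1, hm2⟩)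
          have hlt := pair_lt_of_key_le (show m < i0 by omega) (hkey m hmS)
          rw [hieq, E_big (by omega)] at hlt
          exact hlt
    · have hk1 : 1 ≤ k := by omega
      have hW : W d g lam ν (k + 1) = step d g lam ν k (W d g lam ν k) := by
        obtain ⟨j, rfl⟩ : ∃ j, k = j + 1 := ⟨k - 1, by omega⟩
        rfl
      obtain ⟨h1, h2⟩ := ih hk1 (by omega)
      rw [hW]
      exact step_inv hd hg hnotin hk1 (by omega) h1 h2

end Proofs

/-- If the quantity `m(k)` associated to the algorithm's vector `w_k` is nonzero, then
`n(k)` is also nonzero and `⟨ν, λ_{n(k)}⟩ < ⟨ν, e_{m(k)}⟩`. -/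
theorem statement3 (d g : ℕ) (lam : ℕ → Fin d → ℚ) (hd : 1 ≤ d) (hg : 1 ≤ g)
    (hnn : ∀ j, 1 ≤ j → j ≤ g → ∀ i, 0 ≤ lam j i)
    (hmono : ∀ j, 1 ≤ j → j < g → ∀ i, lam j i ≤ lam (j + 1) i)
    (hnotin : ∀ j, 1 ≤ j → j ≤ g → lam j ∉ Mlat d lam (j - 1))
    (ν : Fin d → ℚ) (hν : ν ∈ Ndual d g lam)
    (hpos : ∀ i, 1 ≤ i → i ≤ d → 0 < pair d ν (E d lam i))
    (k : ℕ) (hk1 : 1 ≤ k) (hkd : k ≤ d)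
    (hm : mVal d lam (W d g lam ν k) ≠ 0) :
    nVal d (W d g lam ν k) ≠ 0 ∧
      pair d ν (lam (nVal d (W d g lam ν k))) <
        pair d ν (E d lam (mVal d lam (W d g lam ν k))) := by
  obtain ⟨hIdx, hii⟩ := main_inv (ν := ν) hd hg hnotin k hk1 hkd
  have hIsub : ∀ i ∈ W d g lam ν k, 1 ≤ i ∧ i ≤ d + g :=
    fun i hi => Finset.mem_Icc.1 (hIdx.2.1 hi)
  have hn0 : nVal d (W d g lam ν k) ≠ 0 := n_ne_zero hIsub hm
  obtain ⟨h1, h2, h3, _⟩ := mVal_spec hm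
  exact ⟨hn0, hii hn0 _ h1 h2 h3⟩

end QO
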